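/- arXiv:2107.11321 — 4 statements merged into one kernel-verified Lean document; each statement's English description precedes it below -/
import Mathlib

section
/- Let W ∈ ℝ^{N×N} be a mixing matrix with ρ := ‖W − (1/N)eeᵀ‖₂ satisfying 0 < ρ < 1. Define μ₀ := 1, μ₁ := 1/ρ, and μ_{r+1} := (2/ρ)μ_r − μ_{r-1} for r ≥ 1. Given A⁰ ∈ ℝ^{N×p}, set A¹ := W A⁰ and A^{r+1} := (2μ_r/(ρ μ_{r+1})) W A^r − (μ_{r-1}/μ_{r+1}) A^{r-1} for r ≥ 1. Then for every integer R ≥ 1: (a) there is a real polynomial P of degree at most R with P(1) = 1 such that A^R = P(W) A⁰; in particular P(W) is symmetric and P(W)e = e; (b) the row average is preserved: (1/N)eeᵀA^R = (1/N)eeᵀA⁰ =: Ā; and (c) ‖A^R − Ā‖_F ≤ 2(1 − √(1−ρ))^R ‖A⁰ − Ā‖_F. -/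
open Matrix Finset

attribute [local instance] Matrix.frobeniusNormedAddCommGroup Matrix.frobeniusNormedSpace

noncomputable section

variable {N p : ℕ}

/-- Frobenius inner product on `N × p` real matrices. -/
def frobInner (A B : Matrix (Fin N) (Fin p) ℝ) : ℝ := ∑ i, ∑ j, A i j * B i j

/-- Squared Frobenius norm. -/
def frobSq (A : Matrix (Fin N) (Fin p) ℝ) : ℝ := frobInner A A

/-- Frobenius norm. -/
def frobNorm (A : Matrix (Fin N) (Fin p) ℝ) : ℝ := Real.sqrt (frobInner A A)

/-- The continuous linear functional `H ↦ ⟨G, H⟩_F`. -/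
def frobCLM (G : Matrix (Fin N) (Fin p) ℝ) : Matrix (Fin N) (Fin p) ℝ →L[ℝ] ℝ :=
  LinearMap.toContinuousLinearMap
    { toFun := fun H => frobInner G H
      map_add' := by
        intro x y
        simp [frobInner, Matrix.add_apply, mul_add, Finset.sum_add_distrib]
      map_smul' := by
        intro c x
        simp [frobInner, Matrix.smul_apply, Finset.mul_sum]
        ring_nf
        apply Finset.sum_congr rfl; intro i _
        apply Finset.sum_congr rfl; intro j _; ring }

/-- Spectral norm (operator 2-norm) of a square real matrix. -/
def specNorm {N : ℕ} (M : Matrix (Fin N) (Fin N) ℝ) : ℝ :=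
  ‖Matrix.toEuclideanCLM (𝕜 := ℝ) M‖

/-- The all-ones `N × N` matrix. -/
def onesMat (N : ℕ) : Matrix (Fin N) (Fin N) ℝ := fun _ _ => 1

/-- Quadratic form `‖A‖_M² := ⟨A, M A⟩_F` for a symmetric `M` (possibly negative). -/
def quadForm (M : Matrix (Fin N) (Fin N) ℝ) (A : Matrix (Fin N) (Fin p) ℝ) : ℝ :=
  frobInner A (M * A)

/-- Augmented Lagrangian `L_η(X, X0; Y, Z)`, where `S` plays the role of `√(I−W)`. -/
def Lag (F : Matrix (Fin N) (Fin p) ℝ → ℝ) (S : Matrix (Fin N) (Fin N) ℝ) (η : ℝ)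
    (X X0 Y Z : Matrix (Fin N) (Fin p) ℝ) : ℝ :=
  F X + frobInner Y (X - X0) + (2*η)⁻¹ * frobSq (X - X0)
    + frobInner Z (S * X0) + (2*η)⁻¹ * frobSq (S * X0)

section Aux
open Polynomial

lemma frobInner_eq_trace (A B : Matrix (Fin N) (Fin p) ℝ) :
    frobInner A B = (Aᵀ * B).trace := by
  simp [frobInner, Matrix.trace, Matrix.diag, Matrix.mul_apply]
  rw [Finset.sum_comm]

lemma frobSq_nonneg (A : Matrix (Fin N) (Fin p) ℝ) : 0 ≤ frobSq A := by
  unfold frobSq frobInner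
  apply Finset.sum_nonneg; intro i _; apply Finset.sum_nonneg; intro j _
  exact mul_self_nonneg _

lemma frobSq_orth (U : Matrix (Fin N) (Fin N) ℝ) (hU : Uᵀ * U = 1)
    (B : Matrix (Fin N) (Fin p) ℝ) : frobSq (U * B) = frobSq B := by
  simp only [frobSq, frobInner_eq_trace, Matrix.transpose_mul]
  rw [Matrix.mul_assoc, ← Matrix.mul_assoc Uᵀ U B, hU, Matrix.one_mul]

lemma frobSq_diag_le (d : Fin N → ℝ) (c : ℝ) (hc : ∀ i, |d i| ≤ c)
    (B : Matrix (Fin N) (Fin p) ℝ) :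
    frobSq (Matrix.diagonal d * B) ≤ c^2 * frobSq B := by
  simp only [frobSq, frobInner, Matrix.diagonal_mul, Finset.mul_sum]
  apply Finset.sum_le_sum; intro i _
  apply Finset.sum_le_sum; intro j _
  have h1 : (d i * B i j) * (d i * B i j) = (d i)^2 * (B i j * B i j) := by ring
  rw [h1]
  apply mul_le_mul_of_nonneg_right _ (mul_self_nonneg _)
  calc (d i)^2 = |d i|^2 := (sq_abs _).symm
    _ ≤ c^2 := by
        apply pow_le_pow_left₀ (abs_nonneg _) (hc i)

lemma aeval_conj (U D : Matrix (Fin N) (Fin N) ℝ) (hU : U * Uᵀ = 1) (hU' : Uᵀ * U = 1)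
    (P : ℝ[X]) : aeval (U * D * Uᵀ) P = U * (aeval D P) * Uᵀ := by
  have hpow : ∀ k : ℕ, (U * D * Uᵀ)^k = U * D^k * Uᵀ := by
    intro k; induction k with
    | zero => rw [pow_zero, pow_zero, Matrix.mul_one, hU]
    | succ k ih =>
        rw [pow_succ, ih, pow_succ]
        have : U * D ^ k * Uᵀ * (U * D * Uᵀ) = U * D^k * (Uᵀ * U) * D * Uᵀ := by
          simp only [Matrix.mul_assoc]
        rw [this, hU']
        simp only [Matrix.mul_assoc, Matrix.mul_one]
  rw [aeval_eq_sum_range, aeval_eq_sum_range]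
  simp only [hpow]
  simp only [Matrix.mul_sum, Matrix.sum_mul]
  apply Finset.sum_congr rfl; intro k _
  simp only [Matrix.mul_smul, Matrix.smul_mul]

lemma aeval_diag (d : Fin N → ℝ) (P : ℝ[X]) :
    aeval (Matrix.diagonal d) P = Matrix.diagonal (fun i => P.eval (d i)) := by
  rw [aeval_eq_sum_range]
  have : ∀ i, P.eval (d i) = ∑ k ∈ Finset.range (P.natDegree + 1), P.coeff k * (d i)^k := by
    intro i; rw [eval_eq_sum_range]
  simp only [this]
  ext i j
  simp only [Matrix.sum_apply, Matrix.smul_apply, Matrix.diagonal_pow, Matrix.diagonal_apply,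
    smul_eq_mul]
  by_cases h : i = j
  · simp [h, Pi.pow_apply]
  · simp [h]

lemma eigenvalue_abs_le (M : Matrix (Fin N) (Fin N) ℝ) (hM : M.IsHermitian) (i : Fin N) :
    |hM.eigenvalues i| ≤ specNorm M := by
  set v := hM.eigenvectorBasis i with hv
  have hnv : ‖v‖ = 1 := hM.eigenvectorBasis.orthonormal.1 i
  have happ : Matrix.toEuclideanCLM (𝕜 := ℝ) M v = hM.eigenvalues i • v := by
    apply (WithLp.equiv 2 _).injective
    show WithLp.ofLp (Matrix.toEuclideanCLM (𝕜 := ℝ) M v) = WithLp.ofLp (hM.eigenvalues i • v)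
    rw [Matrix.ofLp_toEuclideanCLM]
    have := hM.mulVec_eigenvectorBasis i
    exact this
  have h1 : ‖Matrix.toEuclideanCLM (𝕜 := ℝ) M v‖ ≤ specNorm M * ‖v‖ :=
    (Matrix.toEuclideanCLM (𝕜 := ℝ) M).le_opNorm v
  rw [happ, norm_smul, hnv, mul_one, mul_one] at h1
  simpa using h1

lemma frobNorm_aeval_le (M : Matrix (Fin N) (Fin N) ℝ) (hM : M.IsHermitian) (P : ℝ[X])
    (c : ℝ) (hc0 : 0 ≤ c) (hc : ∀ t : ℝ, |t| ≤ specNorm M → |P.eval t| ≤ c)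
    (B : Matrix (Fin N) (Fin p) ℝ) :
    frobNorm (aeval M P * B) ≤ c * frobNorm B := by
  set U := (hM.eigenvectorUnitary : Matrix (Fin N) (Fin N) ℝ) with hUdef
  have hstar : (star U : Matrix (Fin N) (Fin N) ℝ) = Uᵀ := by
    ext i j; simp [Matrix.star_apply]
  have hU1 : U * Uᵀ = 1 := by
    rw [← hstar]; exact (Unitary.mul_star_self_of_mem hM.eigenvectorUnitary.2)
  have hU2 : Uᵀ * U = 1 := by
    rw [← hstar]; exact (Unitary.star_mul_self_of_mem hM.eigenvectorUnitary.2)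
  have hspec : M = U * Matrix.diagonal hM.eigenvalues * Uᵀ := by
    have := hM.spectral_theorem
    rw [Unitary.conjStarAlgAut_apply, ← hUdef, hstar] at this
    simpa using this
  have key := aeval_conj U (Matrix.diagonal hM.eigenvalues) hU1 hU2 P
  rw [← hspec] at key
  have haev : aeval M P * B
      = U * (Matrix.diagonal (fun i => P.eval (hM.eigenvalues i)) * (Uᵀ * B)) := by
    rw [key, aeval_diag]
    simp only [Matrix.mul_assoc]
  have hsq : frobSq (aeval M P * B) ≤ c^2 * frobSq B := by
    rw [haev, frobSq_orth U hU2]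
    calc frobSq (Matrix.diagonal (fun i => P.eval (hM.eigenvalues i)) * (Uᵀ * B))
        ≤ c^2 * frobSq (Uᵀ * B) := by
          apply frobSq_diag_le
          intro i
          exact hc _ (eigenvalue_abs_le M hM i)
      _ = c^2 * frobSq B := by
          rw [frobSq_orth Uᵀ (by rw [Matrix.transpose_transpose]; exact hU1) B]
  show Real.sqrt _ ≤ _
  have : frobNorm B = Real.sqrt (frobSq B) := rfl
  calc Real.sqrt (frobInner (aeval M P * B) (aeval M P * B))
      ≤ Real.sqrt (c^2 * frobSq B) := Real.sqrt_le_sqrt hsq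
    _ = c * Real.sqrt (frobSq B) := by
        rw [Real.sqrt_mul (sq_nonneg c), Real.sqrt_sq hc0]
    _ = c * frobNorm B := rfl

lemma aeval_transpose (W : Matrix (Fin N) (Fin N) ℝ) (hW : Wᵀ = W) (Q : ℝ[X]) :
    (aeval W Q)ᵀ = aeval W Q := by
  rw [aeval_eq_sum_range, Matrix.transpose_sum]
  apply Finset.sum_congr rfl; intro k _
  rw [Matrix.transpose_smul, Matrix.transpose_pow, hW]

lemma pow_mulVec_ones (W : Matrix (Fin N) (Fin N) ℝ)
    (hW : W.mulVec (fun _ => (1:ℝ)) = fun _ => (1:ℝ)) (k : ℕ) :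
    (W^k).mulVec (fun _ => (1:ℝ)) = fun _ => (1:ℝ) := by
  induction k with
  | zero => simp
  | succ k ih => rw [pow_succ, ← Matrix.mulVec_mulVec, hW, ih]

lemma aeval_mulVec_ones (W : Matrix (Fin N) (Fin N) ℝ)
    (hW : W.mulVec (fun _ => (1:ℝ)) = fun _ => (1:ℝ)) (Q : ℝ[X]) :
    (aeval W Q).mulVec (fun _ => (1:ℝ)) = Q.eval 1 • (fun _ => (1:ℝ)) := by
  rw [aeval_eq_sum_range, eval_eq_sum_range]
  have hsum : (∑ k ∈ Finset.range (Q.natDegree + 1), Q.coeff k • W^k).mulVec (fun _ => (1:ℝ))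
      = ∑ k ∈ Finset.range (Q.natDegree + 1), (Q.coeff k • W^k).mulVec (fun _ => (1:ℝ)) := by
    ext i
    simp only [Matrix.mulVec, dotProduct, Finset.sum_apply, Matrix.sum_apply,
      Finset.sum_mul]
    rw [Finset.sum_comm]
  rw [hsum]
  have : ∀ k, (Q.coeff k • W^k).mulVec (fun _ => (1:ℝ)) = Q.coeff k • (fun _ => (1:ℝ)) := by
    intro k
    rw [Matrix.smul_mulVec, pow_mulVec_ones W hW]
  rw [Finset.sum_congr rfl (fun k _ => this k), ← Finset.sum_smul]
  congr 1
  simp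

lemma mul_aeval_J (W J : Matrix (Fin N) (Fin N) ℝ) (hJW : J * W = J) (Q : ℝ[X]) :
    J * aeval W Q = Q.eval 1 • J := by
  have hpow : ∀ k, J * W^k = J := by
    intro k; induction k with
    | zero => simp
    | succ k ih => rw [pow_succ, ← Matrix.mul_assoc, ih, hJW]
  rw [aeval_eq_sum_range, eval_eq_sum_range, Matrix.mul_sum]
  simp only [Matrix.mul_smul, hpow]
  rw [← Finset.sum_smul]
  congr 1
  simp

lemma aeval_J_mul (W J : Matrix (Fin N) (Fin N) ℝ) (hWJ : W * J = J) (Q : ℝ[X]) :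
    aeval W Q * J = Q.eval 1 • J := by
  have hpow : ∀ k, W^k * J = J := by
    intro k; induction k with
    | zero => simp
    | succ k ih => rw [pow_succ, Matrix.mul_assoc, hWJ, ih]
  rw [aeval_eq_sum_range, eval_eq_sum_range, Matrix.sum_mul]
  simp only [Matrix.smul_mul, hpow]
  rw [← Finset.sum_smul]
  congr 1
  simp

lemma aeval_shift (W J : Matrix (Fin N) (Fin N) ℝ) (hJW : J * W = J) (hJJ : J * J = J)
    (Q : ℝ[X]) : aeval W Q * (1 - J) = aeval (W - J) Q * (1 - J) := by
  have hJk : ∀ k, J * W^k = J := by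
    intro k; induction k with
    | zero => simp
    | succ k ih => rw [pow_succ, ← Matrix.mul_assoc, ih, hJW]
  have hpow : ∀ k, W^k * (1 - J) = (W - J)^k * (1 - J) := by
    intro k; induction k with
    | zero => simp
    | succ k ih =>
        have h1 : W^(k+1) * (1 - J) = W * (W^k * (1 - J)) := by
          rw [pow_succ']; rw [Matrix.mul_assoc]
        have h2 : J * (W^k * (1 - J)) = 0 := by
          rw [← Matrix.mul_assoc, hJk, Matrix.mul_sub, hJJ, Matrix.mul_one, sub_self]
        rw [h1, ih]
        have h2' : J * ((W - J)^k * (1 - J)) = 0 := by rw [← ih]; exact h2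
        have h3 : W * ((W - J)^k * (1 - J))
            = (W - J) * ((W - J)^k * (1 - J)) + J * ((W - J)^k * (1 - J)) := by
          rw [← Matrix.add_mul, sub_add_cancel]
        rw [h3, h2', add_zero, ← Matrix.mul_assoc, ← pow_succ']
  rw [aeval_eq_sum_range, aeval_eq_sum_range, Finset.sum_mul, Finset.sum_mul]
  apply Finset.sum_congr rfl; intro k _
  rw [Matrix.smul_mul, Matrix.smul_mul, hpow]

def cheb (ρ : ℝ) : ℕ → ℝ[X]
  | 0 => 1
  | 1 => Polynomial.C ρ⁻¹ * Polynomial.X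
  | (r+2) => Polynomial.C (2/ρ) * Polynomial.X * cheb ρ (r+1) - cheb ρ r

lemma cheb_natDegree (ρ : ℝ) : ∀ r, (cheb ρ r).natDegree ≤ r ∧ (cheb ρ (r+1)).natDegree ≤ r+1 := by
  intro r
  induction r with
  | zero =>
      constructor
      · simp [cheb]
      · simp only [cheb]
        calc (Polynomial.C ρ⁻¹ * Polynomial.X).natDegree
            ≤ (Polynomial.C ρ⁻¹).natDegree + Polynomial.X.natDegree := natDegree_mul_le
          _ ≤ 1 := by simp
  | succ r ih =>
      refine ⟨ih.2, ?_⟩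
      show (cheb ρ (r+2)).natDegree ≤ r + 2
      simp only [cheb]
      calc (Polynomial.C (2/ρ) * Polynomial.X * cheb ρ (r+1) - cheb ρ r).natDegree
          ≤ max (Polynomial.C (2/ρ) * Polynomial.X * cheb ρ (r+1)).natDegree
              (cheb ρ r).natDegree := natDegree_sub_le _ _
        _ ≤ r + 2 := by
            apply max_le _ (le_trans ih.1 (by omega))
            calc (Polynomial.C (2/ρ) * Polynomial.X * cheb ρ (r+1)).natDegree
                ≤ (Polynomial.C (2/ρ) * Polynomial.X).natDegree + (cheb ρ (r+1)).natDegree :=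
                  natDegree_mul_le
              _ ≤ 1 + (r+1) := by
                  gcongr
                  · calc (Polynomial.C (2/ρ) * Polynomial.X).natDegree
                        ≤ (Polynomial.C (2/ρ)).natDegree + Polynomial.X.natDegree :=
                          natDegree_mul_le
                      _ ≤ 1 := by simp
                  · exact ih.2
              _ = r + 2 := by omega

lemma cheb_eval_cos (ρ : ℝ) (hρ : ρ ≠ 0) (θ : ℝ) :
    ∀ r : ℕ, (cheb ρ r).eval (ρ * Real.cos θ) = Real.cos (r * θ)
      ∧ (cheb ρ (r+1)).eval (ρ * Real.cos θ) = Real.cos ((r+1) * θ) := by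
  have hkey : ∀ a : ℝ, Real.cos (a + θ) = 2 * Real.cos θ * Real.cos a - Real.cos (a - θ) := by
    intro a; rw [Real.cos_add, Real.cos_sub]; ring
  intro r
  induction r with
  | zero =>
      constructor
      · simp [cheb]
      · simp [cheb, hρ]
  | succ r ih =>
      refine ⟨by push_cast; exact_mod_cast ih.2, ?_⟩
      show (cheb ρ (r+2)).eval (ρ * Real.cos θ) = _
      simp only [cheb, eval_sub, eval_mul, eval_C, eval_X, ih.1, ih.2]
      push_cast
      rw [show ((r:ℝ)+1+1)*θ = ((r:ℝ)+1)*θ + θ by ring, hkey,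
        show ((r:ℝ)+1)*θ - θ = (r:ℝ)*θ by ring]
      field_simp

lemma seq_unique (ρ : ℝ) (a b : ℕ → ℝ) (h0 : a 0 = b 0) (h1 : a 1 = b 1)
    (ha : ∀ r, a (r+2) = (2/ρ) * a (r+1) - a r) (hb : ∀ r, b (r+2) = (2/ρ) * b (r+1) - b r) :
    ∀ r, a r = b r := by
  have key : ∀ r, a r = b r ∧ a (r+1) = b (r+1) := by
    intro r
    induction r with
    | zero => exact ⟨h0, h1⟩
    | succ r ih => exact ⟨ih.2, by rw [ha, hb, ih.1, ih.2]⟩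
  exact fun r => (key r).1

lemma cheb_eval_one (ρ : ℝ) (μ : ℕ → ℝ) (hμ0 : μ 0 = 1) (hμ1 : μ 1 = 1/ρ)
    (hμrec : ∀ r : ℕ, μ (r+2) = (2/ρ) * μ (r+1) - μ r) :
    ∀ r, (cheb ρ r).eval 1 = μ r := by
  apply seq_unique ρ
  · simp [cheb, hμ0]
  · simp [cheb, hμ1, one_div]
  · intro r; simp [cheb]
  · exact hμrec

lemma mu_formula (ρ : ℝ) (y : ℝ) (hy : y ≠ 0) (hsum : y + y⁻¹ = 2/ρ)
    (μ : ℕ → ℝ) (hμ0 : μ 0 = 1) (hμ1 : μ 1 = 1/ρ)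
    (hμrec : ∀ r : ℕ, μ (r+2) = (2/ρ) * μ (r+1) - μ r) :
    ∀ r, μ r = (y^r + (y⁻¹)^r)/2 := by
  apply seq_unique ρ
  · simp [hμ0]
  · rw [hμ1, pow_one, pow_one, hsum]; ring
  · exact hμrec
  · intro r
    rw [← hsum]
    have hyy : y * y⁻¹ = 1 := mul_inv_cancel₀ hy
    linear_combination (-(y^r + (y⁻¹)^r)/2) * hyy

lemma cheb_scalar_bound (ρ : ℝ) (hρpos : 0 < ρ) (hρlt : ρ < 1)
    (μ : ℕ → ℝ) (hμ0 : μ 0 = 1) (hμ1 : μ 1 = 1/ρ)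
    (hμrec : ∀ r : ℕ, μ (r+2) = (2/ρ) * μ (r+1) - μ r) (R : ℕ) :
    0 < μ R ∧ ∀ t : ℝ, |t| ≤ ρ →
      |(μ R)⁻¹ * (cheb ρ R).eval t| ≤ 2 * (1 - Real.sqrt (1-ρ))^R := by
  set s := Real.sqrt (1 - ρ^2) with hsdef
  set u := Real.sqrt (1 - ρ) with hudef
  have hs2 : s^2 = 1 - ρ^2 := Real.sq_sqrt (by nlinarith)
  have hu2 : u^2 = 1 - ρ := Real.sq_sqrt (by linarith)
  have hs0 : 0 ≤ s := Real.sqrt_nonneg _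
  have hu0 : 0 ≤ u := Real.sqrt_nonneg _
  have hu1 : u ≤ 1 := Real.sqrt_le_one.2 (by linarith)
  have hsu : u ≤ s := by
    apply Real.sqrt_le_sqrt; nlinarith
  set y := (1+s)/ρ with hydef
  have hy0 : 0 < y := div_pos (by linarith) hρpos
  have hyinv : y⁻¹ = ρ/(1+s) := by
    rw [hydef, inv_div]
  have hsum : y + y⁻¹ = 2/ρ := by
    rw [hyinv, hydef]
    field_simp
    nlinarith [hs2]
  have hμform := mu_formula ρ y hy0.ne' hsum μ hμ0 hμ1 hμrec
  have hypowpos : 0 < y^R := pow_pos hy0 R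
  have hμlb : y^R/2 ≤ μ R := by
    rw [hμform R]
    have : 0 ≤ (y⁻¹)^R := pow_nonneg (inv_nonneg.2 hy0.le) R
    linarith
  have hμpos : 0 < μ R := lt_of_lt_of_le (by linarith) hμlb
  refine ⟨hμpos, ?_⟩
  have hinvle : y⁻¹ ≤ 1 - u := by
    rw [hyinv, div_le_iff₀ (by linarith : (0:ℝ) < 1 + s)]
    nlinarith [mul_nonneg (sub_nonneg.2 hu1) (sub_nonneg.2 hsu)]
  have hμRinv : (μ R)⁻¹ ≤ 2 * (1-u)^R := by
    have h1 : (μ R)⁻¹ ≤ (y^R/2)⁻¹ := by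
      apply inv_anti₀ (by linarith) hμlb
    have h2 : (y^R/2)⁻¹ = 2 * (y⁻¹)^R := by
      rw [inv_pow]
      rw [div_eq_mul_inv, mul_inv, inv_inv]
      ring
    rw [h2] at h1
    refine h1.trans ?_
    have := pow_le_pow_left₀ (inv_nonneg.2 hy0.le) hinvle R
    linarith
  intro t ht
  have habs : |(cheb ρ R).eval t| ≤ 1 := by
    have hdiv : -1 ≤ t/ρ ∧ t/ρ ≤ 1 := by
      have := abs_le.1 ht
      constructor
      · rw [le_div_iff₀ hρpos]; linarith [this.1]
      · rw [div_le_iff₀ hρpos]; linarith [this.2]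
    have hcos : ρ * Real.cos (Real.arccos (t/ρ)) = t := by
      rw [Real.cos_arccos hdiv.1 hdiv.2]
      field_simp
    have := (cheb_eval_cos ρ hρpos.ne' (Real.arccos (t/ρ)) R).1
    rw [hcos] at this
    rw [this]
    exact Real.abs_cos_le_one _
  rw [abs_mul, abs_of_pos (inv_pos.2 hμpos)]
  calc (μ R)⁻¹ * |(cheb ρ R).eval t| ≤ (μ R)⁻¹ * 1 := by
        apply mul_le_mul_of_nonneg_left habs (inv_pos.2 hμpos).le
    _ = (μ R)⁻¹ := mul_one _
    _ ≤ 2 * (1-u)^R := hμRinv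

end Aux

/-- Chebyshev acceleration.
`μ` and `A` follow the Chebyshev recursions (the recursion for `A` is stated for
`r ≥ 1` in the shifted form `r ↦ r+1`).  For every `R ≥ 1`:
(a) `A^R = P(W) A⁰` for a real polynomial `P` of degree at most `R` with `P(1) = 1`;
in particular `P(W)` is symmetric and `P(W) e = e`;
(b) the row average is preserved: `(1/N) e eᵀ A^R = (1/N) e eᵀ A⁰ = Ā`; and
(c) `‖A^R − Ā‖_F ≤ 2 (1 − √(1−ρ))^R ‖A⁰ − Ā‖_F`. -/
theorem chebyshev_acceleration (N p : ℕ) (hN : 0 < N) (hp : 0 < p)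
    -- mixing matrix assumptions
    (W : Matrix (Fin N) (Fin N) ℝ) (hWsym : Wᵀ = W)
    (hWub : Matrix.PosSemidef (1 - W)) (hWlb : Matrix.PosDef (1 + W))
    (hWnull : ∀ v : Fin N → ℝ, (1 - W).mulVec v = 0 ↔ ∃ c : ℝ, v = fun _ => c)
    (ρ : ℝ) (hρdef : ρ = specNorm (W - (N:ℝ)⁻¹ • onesMat N)) (hρlt : ρ < 1)
    (hρpos : 0 < ρ)
    -- Chebyshev step-size recursion
    (μ : ℕ → ℝ) (hμ0 : μ 0 = 1) (hμ1 : μ 1 = 1/ρ)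
    (hμrec : ∀ r : ℕ, μ (r+2) = (2/ρ) * μ (r+1) - μ r)
    -- Chebyshev iterates
    (A : ℕ → Matrix (Fin N) (Fin p) ℝ)
    (hA1 : A 1 = W * A 0)
    (hArec : ∀ r : ℕ, A (r+2)
        = (2 * μ (r+1) / (ρ * μ (r+2))) • (W * A (r+1)) - (μ r / μ (r+2)) • A r) :
    ∀ R : ℕ, 1 ≤ R →
      (∃ P : Polynomial ℝ, P.natDegree ≤ R ∧ P.eval (1:ℝ) = 1 ∧
          A R = (Polynomial.aeval W P) * A 0 ∧
          (Polynomial.aeval W P)ᵀ = Polynomial.aeval W P ∧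
          (Polynomial.aeval W P).mulVec (fun _ => (1:ℝ)) = (fun _ => (1:ℝ))) ∧
      (N:ℝ)⁻¹ • (onesMat N * A R) = (N:ℝ)⁻¹ • (onesMat N * A 0) ∧
      frobNorm (A R - (N:ℝ)⁻¹ • (onesMat N * A 0))
        ≤ 2 * (1 - Real.sqrt (1-ρ))^R * frobNorm (A 0 - (N:ℝ)⁻¹ • (onesMat N * A 0)) := by
  intro R hR
  have hNne : (N:ℝ) ≠ 0 := Nat.cast_ne_zero.2 hN.ne'
  -- basic facts about W and the averaging matrix
  have hones : W.mulVec (fun _ => (1:ℝ)) = fun _ => (1:ℝ) := by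
    have h := (hWnull (fun _ => (1:ℝ))).2 ⟨1, rfl⟩
    rw [Matrix.sub_mulVec, Matrix.one_mulVec] at h
    exact (sub_eq_zero.1 h).symm
  have hsym : ∀ a b, W a b = W b a := by
    intro a b
    exact (congrFun (congrFun hWsym a) b).symm
  have hWones : W * onesMat N = onesMat N := by
    ext i j
    have h := congrFun hones i
    simp only [Matrix.mulVec, dotProduct, mul_one] at h
    simp [Matrix.mul_apply, onesMat, h]
  have honesW : onesMat N * W = onesMat N := by
    ext i j
    have h := congrFun hones j
    simp only [Matrix.mulVec, dotProduct, mul_one] at h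
    simp only [Matrix.mul_apply, onesMat, one_mul]
    rw [Finset.sum_congr rfl (fun k _ => hsym k j)]
    exact h
  have honesones : onesMat N * onesMat N = (N:ℝ) • onesMat N := by
    ext i j
    simp [Matrix.mul_apply, onesMat]
  set J : Matrix (Fin N) (Fin N) ℝ := (N:ℝ)⁻¹ • onesMat N with hJdef
  have hJW : J * W = J := by rw [hJdef, Matrix.smul_mul, honesW]
  have hWJ : W * J = J := by rw [hJdef, Matrix.mul_smul, hWones]
  have hJJ : J * J = J := by
    rw [hJdef, Matrix.smul_mul, Matrix.mul_smul, honesones, smul_smul, smul_smul]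
    congr 1
    field_simp
  set M : Matrix (Fin N) (Fin N) ℝ := W - J with hMdef
  have hspecM : specNorm M = ρ := hρdef.symm
  have hMH : M.IsHermitian := by
    show Mᴴ = M
    ext i j
    simp only [Matrix.conjTranspose_apply, hMdef, hJdef, Matrix.sub_apply, Matrix.smul_apply,
      onesMat, star_trivial, smul_eq_mul]
    rw [hsym j i]
  -- positivity of μ and the scalar bound
  have hμpos : ∀ r, 0 < μ r := fun r => (cheb_scalar_bound ρ hρpos hρlt μ hμ0 hμ1 hμrec r).1
  -- the polynomial recursion for the iterates
  have claim : ∀ r, μ r • A r = Polynomial.aeval W (cheb ρ r) * A 0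
      ∧ μ (r+1) • A (r+1) = Polynomial.aeval W (cheb ρ (r+1)) * A 0 := by
    intro r
    induction r with
    | zero =>
        constructor
        · rw [hμ0, one_smul]
          simp [cheb]
        · rw [hμ1, hA1]
          have h1 : Polynomial.aeval W (cheb ρ 1) = ρ⁻¹ • W := by
            show Polynomial.aeval W (Polynomial.C ρ⁻¹ * Polynomial.X) = _
            rw [_root_.map_mul, Polynomial.aeval_C, Polynomial.aeval_X, ← Algebra.smul_def]
          rw [h1, Matrix.smul_mul, one_div]
    | succ r ih =>
        refine ⟨ih.2, ?_⟩
        have hne2 : μ (r+2) ≠ 0 := (hμpos (r+2)).ne'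
        have hc1 : μ (r+2) * (2 * μ (r+1) / (ρ * μ (r+2))) = (2/ρ) * μ (r+1) := by
          field_simp [hne2, hρpos.ne']
        have hc2 : μ (r+2) * (μ r / μ (r+2)) = μ r := by
          field_simp [hne2]
        rw [hArec r, smul_sub, smul_smul, smul_smul, hc1, hc2]
        have h3 : ((2/ρ) * μ (r+1)) • (W * A (r+1)) = (2/ρ) • (W * (μ (r+1) • A (r+1))) := by
          rw [Matrix.mul_smul, smul_smul]
        rw [h3, ih.2, ih.1]
        have h4 : Polynomial.aeval W (cheb ρ (r+2))
            = (2/ρ) • (W * Polynomial.aeval W (cheb ρ (r+1))) - Polynomial.aeval W (cheb ρ r) := by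
          show Polynomial.aeval W (Polynomial.C (2/ρ) * Polynomial.X * cheb ρ (r+1) - cheb ρ r) = _
          rw [map_sub, _root_.map_mul, _root_.map_mul, Polynomial.aeval_C, Polynomial.aeval_X,
            ← Algebra.smul_def, Matrix.smul_mul]
        rw [h4, Matrix.sub_mul, Matrix.smul_mul, Matrix.mul_assoc]
  -- the normalized polynomial
  set P : Polynomial ℝ := Polynomial.C (μ R)⁻¹ * cheb ρ R with hPdef
  have haevalP : Polynomial.aeval W P = (μ R)⁻¹ • Polynomial.aeval W (cheb ρ R) := by
    rw [hPdef, _root_.map_mul, Polynomial.aeval_C, ← Algebra.smul_def]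
  have hARP : A R = Polynomial.aeval W P * A 0 := by
    rw [haevalP, Matrix.smul_mul, ← (claim R).1, smul_smul,
      inv_mul_cancel₀ (hμpos R).ne', one_smul]
  have heval1 : P.eval 1 = 1 := by
    rw [hPdef, Polynomial.eval_mul, Polynomial.eval_C,
      cheb_eval_one ρ μ hμ0 hμ1 hμrec R, inv_mul_cancel₀ (hμpos R).ne']
  have hJA : ∀ B : Matrix (Fin N) (Fin p) ℝ, J * B = (N:ℝ)⁻¹ • (onesMat N * B) := by
    intro B
    rw [hJdef, Matrix.smul_mul]
  have hpartb : (N:ℝ)⁻¹ • (onesMat N * A R) = (N:ℝ)⁻¹ • (onesMat N * A 0) := by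
    rw [← hJA, ← hJA, hARP, ← Matrix.mul_assoc, mul_aeval_J W J hJW P, heval1, one_smul]
  refine ⟨⟨P, ?_, heval1, hARP, aeval_transpose W hWsym P, ?_⟩, hpartb, ?_⟩
  · calc P.natDegree ≤ (cheb ρ R).natDegree := Polynomial.natDegree_C_mul_le _ _
      _ ≤ R := (cheb_natDegree ρ R).1
  · rw [aeval_mulVec_ones W hones P, heval1, one_smul]
  -- part (c)
  · set Abar : Matrix (Fin N) (Fin p) ℝ := (N:ℝ)⁻¹ • (onesMat N * A 0) with hAbardef
    have hAbar : J * A 0 = Abar := hJA (A 0)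
    have hkeyid : A R - Abar = Polynomial.aeval M P * (A 0 - Abar) := by
      have e0 : (1 - J) * A 0 = A 0 - Abar := by
        rw [Matrix.sub_mul, Matrix.one_mul, hAbar]
      have e1 : Polynomial.aeval W P * (1 - J) * A 0 = A R - Abar := by
        rw [Matrix.mul_sub, Matrix.mul_one, aeval_J_mul W J hWJ P, heval1, one_smul,
          Matrix.sub_mul, ← hARP, ← hAbar]
      rw [← e1, aeval_shift W J hJW hJJ P, Matrix.mul_assoc, e0]
    have hu1 : Real.sqrt (1-ρ) ≤ 1 := Real.sqrt_le_one.2 (by linarith)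
    have hc0 : (0:ℝ) ≤ 2 * (1 - Real.sqrt (1-ρ))^R :=
      mul_nonneg (by norm_num) (pow_nonneg (by linarith) R)
    have hc : ∀ t : ℝ, |t| ≤ specNorm M → |P.eval t| ≤ 2 * (1 - Real.sqrt (1-ρ))^R := by
      intro t ht
      rw [hspecM] at ht
      have := (cheb_scalar_bound ρ hρpos hρlt μ hμ0 hμ1 hμrec R).2 t ht
      rw [hPdef, Polynomial.eval_mul, Polynomial.eval_C]
      exact this
    rw [hkeyid]
    exact frobNorm_aeval_le M hMH P _ hc0 hc (A 0 - Abar)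


end
end

section
/- For ADAPD iterates, for every k ≥ 1 one has √(I−W) Z^k = Y^k − (1/η) W (X0^k − X0^{k-1}) and Y^k = R^k − ∇F(X^k) − (1/η)(X0^k − X0^{k-1}), where R^k := ∇F(X^k) + Y^{k-1} + (1/η)(X^k − X0^{k-1}). -/
open Matrix Finset

attribute [local instance] Matrix.frobeniusNormedAddCommGroup Matrix.frobeniusNormedSpace

noncomputable section

variable {N p : ℕ}

/-- Lemma: dual variable relations for ADAPD.
For every `k ≥ 1` (written with the shift `k ↦ k+1`):
`√(I−W) Z^{k+1} = Y^{k+1} − (1/η) W (X0^{k+1} − X0^k)` and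
`Y^{k+1} = R^{k+1} − ∇F(X^{k+1}) − (1/η)(X0^{k+1} − X0^k)`,
where `R^{k+1} = ∇F(X^{k+1}) + Y^k + (1/η)(X^{k+1} − X0^k)`. -/
theorem adapd_dual_variable_relation (N p : ℕ) (hN : 0 < N) (hp : 0 < p)
    -- mixing matrix assumptions
    (W : Matrix (Fin N) (Fin N) ℝ) (hWsym : Wᵀ = W)
    (hWub : Matrix.PosSemidef (1 - W)) (hWlb : Matrix.PosDef (1 + W))
    (hWnull : ∀ v : Fin N → ℝ, (1 - W).mulVec v = 0 ↔ ∃ c : ℝ, v = fun _ => c)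
    (ρ : ℝ) (hρdef : ρ = specNorm (W - (N:ℝ)⁻¹ • onesMat N)) (hρlt : ρ < 1)
    -- `S` is the unique positive semidefinite square root of `I − W`
    (S : Matrix (Fin N) (Fin N) ℝ) (hSpsd : S.PosSemidef) (hSsq : S * S = 1 - W)
    -- objective: `F` is `L`-smooth (gradient `G` w.r.t. the Frobenius inner product)
    -- and bounded below by `flb`
    (L flb : ℝ) (hL : 0 < L)
    (F : Matrix (Fin N) (Fin p) ℝ → ℝ)
    (G : Matrix (Fin N) (Fin p) ℝ → Matrix (Fin N) (Fin p) ℝ)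
    (hgrad : ∀ U, HasFDerivAt F (frobCLM (G U)) U)
    (hLip : ∀ U V, frobNorm (G U - G V) ≤ L * frobNorm (U - V))
    (hlb : ∀ U, flb ≤ F U)
    -- ADAPD iterates with parameter `η` and error tolerances `ε`
    (η : ℝ) (hη : 0 < η)
    (ε : ℕ → ℝ) (hεpos : ∀ k, 0 < ε (k+1)) (hεmono : ∀ k, ε (k+2) ≤ ε (k+1))
    (X X0 Y Z : ℕ → Matrix (Fin N) (Fin p) ℝ)
    (hZ0 : ∃ U0 : Matrix (Fin N) (Fin p) ℝ, Z 0 = S * U0)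
    (hres : ∀ k, frobSq (G (X (k+1)) + Y k + η⁻¹ • (X (k+1) - X0 k)) ≤ ε (k+1))
    (hX0it : ∀ k, X0 (k+1) = (2:ℝ)⁻¹ • (W * X0 k + X (k+1) + η • (Y k - S * Z k)))
    (hYit : ∀ k, Y (k+1) = Y k + η⁻¹ • (X (k+1) - X0 (k+1)))
    (hZit : ∀ k, Z (k+1) = Z k + η⁻¹ • (S * X0 (k+1)))
    :
    ∀ k : ℕ,
      S * Z (k+1) = Y (k+1) - η⁻¹ • (W * (X0 (k+1) - X0 k)) ∧
      Y (k+1) = (G (X (k+1)) + Y k + η⁻¹ • (X (k+1) - X0 k)) - G (X (k+1))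
          - η⁻¹ • (X0 (k+1) - X0 k) := by
  intro k
  have h2 : (2:ℝ) • X0 (k+1) = W * X0 k + X (k+1) + η • Y k - η • (S * Z k) := by
    have h := congrArg (fun M => (2:ℝ) • M) (hX0it k)
    simp only [smul_smul] at h
    norm_num at h
    rw [h, smul_sub]
    abel
  have hSZ : S * Z k = Y k - η⁻¹ • ((2:ℝ) • X0 (k+1) - W * X0 k - X (k+1)) := by
    have : η • (S * Z k) = η • Y k - ((2:ℝ) • X0 (k+1) - W * X0 k - X (k+1)) := by
      rw [h2]; abel
    have h3 := congrArg (fun M => η⁻¹ • M) this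
    simp only [smul_smul, inv_mul_cancel₀ (ne_of_gt hη), one_smul, smul_sub] at h3
    rw [h3]; module
  have hY : Y (k+1) = Y k + η⁻¹ • (X (k+1) - X0 (k+1)) := hYit k
  constructor
  · rw [hZit k, Matrix.mul_add, Matrix.mul_smul, ← Matrix.mul_assoc, hSsq, Matrix.sub_mul,
      Matrix.one_mul, Matrix.mul_sub, hY, hSZ]
    module
  · rw [hY]
    module

end
end

section
/- For ADAPD iterates, if η < 1/(2L), then for all k ≥ 0: L_η(X^{k+1},X0^{k+1};Y^{k+1},Z^{k+1}) − L_η(X^k,X0^k;Y^k,Z^k) ≤ ((2Lη−1)/(2η))‖X^{k+1}−X^k‖_F² + ε_{k+1}/(2L) − (1/(2η))‖X0^{k+1}−X0^k‖_F² + η‖Y^{k+1}−Y^k‖_F² + η‖Z^{k+1}−Z^k‖_F². -/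
open Matrix Finset

attribute [local instance] Matrix.frobeniusNormedAddCommGroup Matrix.frobeniusNormedSpace

noncomputable section

variable {N p : ℕ}

section lem
variable (A B C : Matrix (Fin N) (Fin p) ℝ) (r : ℝ)

lemma myFi_comm : frobInner A B = frobInner B A := by
  simp [frobInner, mul_comm]

lemma myFi_add_left : frobInner (A + B) C = frobInner A C + frobInner B C := by
  simp [frobInner, Matrix.add_apply, add_mul, Finset.sum_add_distrib]

lemma myFi_sub_left : frobInner (A - B) C = frobInner A C - frobInner B C := by
  simp [frobInner, Matrix.sub_apply, sub_mul, Finset.sum_sub_distrib]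

lemma myFi_add_right : frobInner C (A + B) = frobInner C A + frobInner C B := by
  simp [frobInner, Matrix.add_apply, mul_add, Finset.sum_add_distrib]

lemma myFi_sub_right : frobInner C (A - B) = frobInner C A - frobInner C B := by
  simp [frobInner, Matrix.sub_apply, mul_sub, Finset.sum_sub_distrib]

lemma myFi_smul_left : frobInner (r • A) B = r * frobInner A B := by
  simp [frobInner, Matrix.smul_apply, Finset.mul_sum, smul_eq_mul, mul_assoc]

lemma myFi_smul_right : frobInner A (r • B) = r * frobInner A B := by
  rw [myFi_comm, myFi_smul_left, myFi_comm]

lemma myFi_neg_right : frobInner A (-B) = -frobInner A B := by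
  simp [frobInner, Matrix.neg_apply, mul_neg, Finset.sum_neg_distrib]

lemma myFrobSq_nonneg : 0 ≤ frobSq A := by
  rw [frobSq, frobInner]
  apply Finset.sum_nonneg; intro i _; apply Finset.sum_nonneg; intro j _
  exact mul_self_nonneg _

lemma myFiSq_sub : frobInner (A - B) (A - B)
    = frobInner A A - 2 * frobInner A B + frobInner B B := by
  simp only [myFi_sub_left, myFi_sub_right]
  linear_combination myFi_comm A B

lemma myFiSq_add : frobInner (A + B) (A + B)
    = frobInner A A + 2 * frobInner A B + frobInner B B := by
  simp only [myFi_add_left, myFi_add_right]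
  linear_combination myFi_comm B A

lemma myFrobSq_neg : frobSq (-A) = frobSq A := by
  simp [frobSq, frobInner, Matrix.neg_apply]

lemma myFi_trace : frobInner A B = Matrix.trace (Aᵀ * B) := by
  simp only [Matrix.trace, Matrix.diag, Matrix.mul_apply, Matrix.transpose_apply]
  exact Finset.sum_comm

lemma myFi_mul_left (M : Matrix (Fin N) (Fin N) ℝ) :
    frobInner (M * A) B = frobInner A (Mᵀ * B) := by
  rw [myFi_trace, myFi_trace, Matrix.transpose_mul, Matrix.mul_assoc]

lemma myFi_quad_nonneg {M : Matrix (Fin N) (Fin N) ℝ} (hM : M.PosSemidef) :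
    0 ≤ frobInner A (M * A) := by
  have h : frobInner A (M * A)
      = ∑ j, dotProduct (fun i => A i j) (M *ᵥ (fun i => A i j)) := by
    rw [frobInner, Finset.sum_comm]
    simp [Matrix.mul_apply, dotProduct, Matrix.mulVec]
  rw [h]
  apply Finset.sum_nonneg; intro j _
  simpa using hM.dotProduct_mulVec_nonneg (fun i => A i j)

lemma myFrobNorm_nonneg : 0 ≤ frobNorm A := Real.sqrt_nonneg _

lemma myFrobNorm_mul_self : frobNorm A * frobNorm A = frobSq A :=
  Real.mul_self_sqrt (myFrobSq_nonneg A)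

lemma myFrobNorm_smul : frobNorm (r • A) = |r| * frobNorm A := by
  rw [frobNorm, myFi_smul_left, myFi_smul_right, ← mul_assoc, frobNorm,
    Real.sqrt_mul (mul_self_nonneg r), Real.sqrt_mul_self_eq_abs r]

lemma myFi_single_sum : frobInner A B = ∑ x : Fin N × Fin p, A x.1 x.2 * B x.1 x.2 := by
  rw [frobInner]; exact (Fintype.sum_prod_type (f := fun x : Fin N × Fin p => A x.1 x.2 * B x.1 x.2)).symm

lemma myFi_le_norm : frobInner A B ≤ frobNorm A * frobNorm B := by
  refine (le_abs_self _).trans ?_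
  have h2 : (frobInner A B)^2 ≤ frobSq A * frobSq B := by
    rw [myFi_single_sum]
    have := Finset.sum_mul_sq_le_sq_mul_sq Finset.univ
      (fun x : Fin N × Fin p => A x.1 x.2) (fun x : Fin N × Fin p => B x.1 x.2)
    calc (∑ x : Fin N × Fin p, A x.1 x.2 * B x.1 x.2) ^ 2
        ≤ (∑ x : Fin N × Fin p, (A x.1 x.2)^2) * ∑ x : Fin N × Fin p, (B x.1 x.2)^2 := this
      _ = frobSq A * frobSq B := by
          rw [frobSq, frobSq, myFi_single_sum, myFi_single_sum]
          simp [sq]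
  calc |frobInner A B| = Real.sqrt ((frobInner A B)^2) := (Real.sqrt_sq_eq_abs _).symm
    _ ≤ Real.sqrt (frobSq A * frobSq B) := Real.sqrt_le_sqrt h2
    _ = frobNorm A * frobNorm B := by
        rw [Real.sqrt_mul (myFrobSq_nonneg A), frobNorm, frobNorm, frobSq, frobSq]

lemma myFi_ge_neg_norm : -(frobNorm A * frobNorm B) ≤ frobInner A B := by
  have := myFi_le_norm (-A) B
  have h1 : frobInner (-A) B = -frobInner A B := by
    simp [frobInner, Matrix.neg_apply, neg_mul, Finset.sum_neg_distrib]
  have h2 : frobNorm (-A) = frobNorm A := by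
    rw [frobNorm, frobNorm]
    congr 1
    simp [frobInner, Matrix.neg_apply]
  rw [h1, h2] at this
  linarith

lemma myFrobNorm_eq_norm : frobNorm A = ‖A‖ := by
  rw [Matrix.frobenius_norm_def, frobNorm, frobInner, Real.sqrt_eq_rpow]
  congr 1
  apply Finset.sum_congr rfl; intro i _
  apply Finset.sum_congr rfl; intro j _
  rw [Real.rpow_two, Real.norm_eq_abs, sq_abs, sq]

end lem

lemma frobCLM_apply (G H : Matrix (Fin N) (Fin p) ℝ) : frobCLM G H = frobInner G H := rfl

lemma descent_lower (L : ℝ) (hL : 0 < L)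
    (F : Matrix (Fin N) (Fin p) ℝ → ℝ)
    (G : Matrix (Fin N) (Fin p) ℝ → Matrix (Fin N) (Fin p) ℝ)
    (hgrad : ∀ U, HasFDerivAt F (frobCLM (G U)) U)
    (hLip : ∀ U V, frobNorm (G U - G V) ≤ L * frobNorm (U - V))
    (A B : Matrix (Fin N) (Fin p) ℝ) :
    F B + frobInner (G B) (A - B) - L/2 * frobSq (A - B) ≤ F A := by
  set D := A - B with hD
  have hderiv : ∀ t : ℝ, HasDerivAt (fun s : ℝ => F (B + s • D))
      (frobInner (G (B + t • D)) D) t := by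
    intro t
    have h1 : HasDerivAt (fun s : ℝ => B + s • D) D t := by
      have := ((hasDerivAt_id t).smul_const D).const_add B
      simp only [id, one_smul] at this
      exact this
    have h2 := (hgrad (B + t • D)).comp_hasDerivAt t h1
    exact h2
  have hGcont : Continuous G := by
    have hlw : LipschitzWith (Real.toNNReal L) G := by
      apply LipschitzWith.of_dist_le_mul
      intro u v
      rw [dist_eq_norm, dist_eq_norm, ← myFrobNorm_eq_norm, ← myFrobNorm_eq_norm]
      calc frobNorm (G u - G v) ≤ L * frobNorm (u - v) := hLip u v
        _ = (Real.toNNReal L : ℝ) * frobNorm (u - v) := by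
            rw [Real.coe_toNNReal L hL.le]
    exact hlw.continuous
  have hline : Continuous fun t : ℝ => B + t • D := by fun_prop
  have hcont : Continuous fun t : ℝ => frobInner (G (B + t • D)) D := by
    have heq : (fun t : ℝ => frobInner (G (B + t • D)) D)
        = fun t : ℝ => frobCLM D (G (B + t • D)) := by
      funext t; rw [frobCLM_apply, myFi_comm]
    rw [heq]
    exact (frobCLM D).continuous.comp (hGcont.comp hline)
  have hFTC : ∫ t in (0:ℝ)..1, frobInner (G (B + t • D)) D = F A - F B := by
    have h := intervalIntegral.integral_eq_sub_of_hasDerivAt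
      (f := fun s : ℝ => F (B + s • D))
      (f' := fun t : ℝ => frobInner (G (B + t • D)) D)
      (fun t _ => hderiv t) (hcont.intervalIntegrable 0 1)
    rw [h]
    norm_num [hD]
  have hlow : ∀ t ∈ Set.Icc (0:ℝ) 1,
      frobInner (G B) D - L * frobSq D * t ≤ frobInner (G (B + t • D)) D := by
    intro t ht
    have hsplit : frobInner (G (B + t • D)) D
        = frobInner (G B) D + frobInner (G (B + t • D) - G B) D := by
      rw [myFi_sub_left]; ring
    rw [hsplit]
    have hge := myFi_ge_neg_norm (G (B + t • D) - G B) D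
    have hlip2 : frobNorm (G (B + t • D) - G B) ≤ L * (t * frobNorm D) := by
      have h3 := hLip (B + t • D) B
      have he : B + t • D - B = t • D := by abel
      rw [he, myFrobNorm_smul, abs_of_nonneg ht.1] at h3
      linarith [h3]
    have hnn := myFrobNorm_nonneg D
    have hb : frobNorm (G (B + t • D) - G B) * frobNorm D
        ≤ L * t * (frobNorm D * frobNorm D) := by
      calc frobNorm (G (B + t • D) - G B) * frobNorm D
          ≤ (L * (t * frobNorm D)) * frobNorm D :=
            mul_le_mul_of_nonneg_right hlip2 hnn
        _ = L * t * (frobNorm D * frobNorm D) := by ring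
    rw [myFrobNorm_mul_self] at hb
    linarith
  have hlowint : IntervalIntegrable
      (fun t : ℝ => frobInner (G B) D - L * frobSq D * t) MeasureTheory.volume 0 1 :=
    (continuous_const.sub (continuous_const.mul continuous_id)).intervalIntegrable 0 1
  have hmono := intervalIntegral.integral_mono_on (μ := MeasureTheory.volume)
    zero_le_one hlowint (hcont.intervalIntegrable 0 1) hlow
  have hcomp : ∫ t in (0:ℝ)..1, (frobInner (G B) D - L * frobSq D * t)
      = frobInner (G B) D - L/2 * frobSq D := by
    have hint2 : IntervalIntegrable (fun t : ℝ => L * frobSq D * t)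
        MeasureTheory.volume 0 1 := by
      apply Continuous.intervalIntegrable; fun_prop
    rw [intervalIntegral.integral_sub intervalIntegrable_const hint2]
    rw [intervalIntegral.integral_const]
    rw [intervalIntegral.integral_const_mul, integral_id]
    norm_num
    ring
  rw [hcomp] at hmono
  rw [hFTC] at hmono
  linarith

set_option maxHeartbeats 1000000 in
/-- Lemma: change of the augmented Lagrangian over one ADAPD iteration. -/
theorem adapd_al_decrease (N p : ℕ) (hN : 0 < N) (hp : 0 < p)
    -- mixing matrix assumptions
    (W : Matrix (Fin N) (Fin N) ℝ) (hWsym : Wᵀ = W)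
    (hWub : Matrix.PosSemidef (1 - W)) (hWlb : Matrix.PosDef (1 + W))
    (hWnull : ∀ v : Fin N → ℝ, (1 - W).mulVec v = 0 ↔ ∃ c : ℝ, v = fun _ => c)
    (ρ : ℝ) (hρdef : ρ = specNorm (W - (N:ℝ)⁻¹ • onesMat N)) (hρlt : ρ < 1)
    -- `S` is the unique positive semidefinite square root of `I − W`
    (S : Matrix (Fin N) (Fin N) ℝ) (hSpsd : S.PosSemidef) (hSsq : S * S = 1 - W)
    -- objective: `F` is `L`-smooth (gradient `G` w.r.t. the Frobenius inner product)
    -- and bounded below by `flb`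
    (L flb : ℝ) (hL : 0 < L)
    (F : Matrix (Fin N) (Fin p) ℝ → ℝ)
    (G : Matrix (Fin N) (Fin p) ℝ → Matrix (Fin N) (Fin p) ℝ)
    (hgrad : ∀ U, HasFDerivAt F (frobCLM (G U)) U)
    (hLip : ∀ U V, frobNorm (G U - G V) ≤ L * frobNorm (U - V))
    (hlb : ∀ U, flb ≤ F U)
    -- ADAPD iterates with parameter `η` and error tolerances `ε`
    (η : ℝ) (hη : 0 < η)
    (ε : ℕ → ℝ) (hεpos : ∀ k, 0 < ε (k+1)) (hεmono : ∀ k, ε (k+2) ≤ ε (k+1))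
    (X X0 Y Z : ℕ → Matrix (Fin N) (Fin p) ℝ)
    (hZ0 : ∃ U0 : Matrix (Fin N) (Fin p) ℝ, Z 0 = S * U0)
    (hres : ∀ k, frobSq (G (X (k+1)) + Y k + η⁻¹ • (X (k+1) - X0 k)) ≤ ε (k+1))
    (hX0it : ∀ k, X0 (k+1) = (2:ℝ)⁻¹ • (W * X0 k + X (k+1) + η • (Y k - S * Z k)))
    (hYit : ∀ k, Y (k+1) = Y k + η⁻¹ • (X (k+1) - X0 (k+1)))
    (hZit : ∀ k, Z (k+1) = Z k + η⁻¹ • (S * X0 (k+1)))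
    (hη2 : η < 1/(2*L)) :
    ∀ k : ℕ,
      Lag F S η (X (k+1)) (X0 (k+1)) (Y (k+1)) (Z (k+1))
          - Lag F S η (X k) (X0 k) (Y k) (Z k)
        ≤ (2*L*η - 1)/(2*η) * frobSq (X (k+1) - X k) + ε (k+1)/(2*L)
          - (2*η)⁻¹ * frobSq (X0 (k+1) - X0 k)
          + η * frobSq (Y (k+1) - Y k) + η * frobSq (Z (k+1) - Z k) := by

  intro k
  have hη' : η ≠ 0 := ne_of_gt hη
  have hc2 : (2*η)⁻¹ = 2⁻¹ * η⁻¹ := by rw [mul_inv]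
  have hX0k := hX0it k
  have hYk := hYit k
  have hZk := hZit k
  have hresk := hres k
  set Xn := X (k+1) with hXndef
  set Xk := X k with hXkdef
  set A0 := X0 k with hA0def
  set B0 := X0 (k+1) with hB0def
  set Yk := Y k with hYkdef
  set Yn := Y (k+1) with hYndef
  set Zk := Z k with hZkdef
  set Zn := Z (k+1) with hZndef
  set R := G Xn + Yk + η⁻¹ • (Xn - A0) with hR
  set d := Xn - Xk with hd
  set d0 := B0 - A0 with hd0
  clear_value Xn Xk A0 B0 Yk Yn Zk Zn R d d0
  -- symmetry facts
  have hSsym : Sᵀ = S := by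
    have h := hSpsd.1
    calc Sᵀ = Sᴴ := by ext i j; simp [Matrix.conjTranspose_apply]
      _ = S := h
  have hWswap : ∀ (U V : Matrix (Fin N) (Fin p) ℝ),
      frobInner U (W * V) = frobInner (W * U) V := by
    intro U V
    rw [myFi_comm, myFi_mul_left, hWsym, myFi_comm]
  have hSS : ∀ (U V : Matrix (Fin N) (Fin p) ℝ),
      frobInner (S * U) (S * V) = frobInner U V - frobInner U (W * V) := by
    intro U V
    rw [myFi_mul_left, hSsym, ← Matrix.mul_assoc, hSsq, Matrix.sub_mul,
      Matrix.one_mul, myFi_sub_right]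
  have hZS : ∀ (U : Matrix (Fin N) (Fin p) ℝ),
      frobInner Zk (S * U) = frobInner (S * Zk) U := by
    intro U
    rw [myFi_comm, myFi_mul_left, hSsym, myFi_comm]
  -- ===== step 3 : dual updates =====
  have hYd : Xn - B0 = η • (Yn - Yk) := by
    rw [hYk, add_sub_cancel_left, smul_smul, mul_inv_cancel₀ hη', one_smul]
  have hZd : S * B0 = η • (Zn - Zk) := by
    rw [hZk, add_sub_cancel_left, smul_smul, mul_inv_cancel₀ hη', one_smul]
  have e3 : Lag F S η Xn B0 Yn Zn - Lag F S η Xn B0 Yk Zk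
      = η * frobSq (Yn - Yk) + η * frobSq (Zn - Zk) := by
    have h1 : frobInner Yn (Xn - B0) - frobInner Yk (Xn - B0)
        = η * frobSq (Yn - Yk) := by
      rw [← myFi_sub_left, hYd, myFi_smul_right]; rfl
    have h2 : frobInner Zn (S * B0) - frobInner Zk (S * B0)
        = η * frobSq (Zn - Zk) := by
      rw [← myFi_sub_left, hZd, myFi_smul_right]; rfl
    simp only [Lag]
    linarith [h1, h2]
  -- ===== step 2 : primal X0 update =====
  have h2B : (2:ℝ) • B0 = W * A0 + Xn + η • (Yk - S * Zk) := by
    rw [hX0k, smul_smul]; norm_num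
  have h2Bs : 2 * frobInner B0 d0 = frobInner (W * A0) d0 + frobInner Xn d0
      + (η * frobInner Yk d0 - η * frobInner (S * Zk) d0) := by
    have h := congrArg (fun M => frobInner M d0) h2B
    simp only [myFi_smul_left, myFi_add_left, myFi_sub_left, mul_sub] at h
    linarith [h]
  have hB0e : B0 = A0 + d0 := by rw [hd0]; abel
  have hXB : Xn - B0 = (Xn - A0) - d0 := by rw [hd0]; abel
  have f13 : frobInner B0 d0 = frobInner A0 d0 + frobInner d0 d0 := by
    rw [hB0e, myFi_add_left]
  have f1 : frobInner Yk (Xn - B0) = frobInner Yk (Xn - A0) - frobInner Yk d0 := by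
    rw [hXB, myFi_sub_right]
  have f2 : frobInner (Xn - B0) (Xn - B0)
      = frobInner (Xn - A0) (Xn - A0) - 2 * frobInner (Xn - A0) d0
        + frobInner d0 d0 := by
    rw [hXB, myFiSq_sub]
  have f3 : frobInner Zk (S * B0) = frobInner Zk (S * A0) + frobInner (S * Zk) d0 := by
    rw [hB0e, Matrix.mul_add, myFi_add_right, hZS d0]
  have f4 : frobInner (S * B0) (S * B0)
      = frobInner (S * A0) (S * A0) + 2 * frobInner (S * A0) (S * d0)
        + frobInner (S * d0) (S * d0) := by
    rw [hB0e, Matrix.mul_add, myFiSq_add]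
  have f5 : frobInner (S * A0) (S * d0) = frobInner A0 d0 - frobInner A0 (W * d0) :=
    hSS A0 d0
  have f6 : frobInner (S * d0) (S * d0) = frobInner d0 d0 - frobInner d0 (W * d0) :=
    hSS d0 d0
  have f11 : frobInner A0 (W * d0) = frobInner (W * A0) d0 := hWswap A0 d0
  have f8 : frobInner (Xn - A0) d0 = frobInner Xn d0 - frobInner A0 d0 :=
    myFi_sub_left Xn A0 d0
  have h' : η * frobInner Yk d0 - η * frobInner (S * Zk) d0
      = 2 * frobInner A0 d0 + 2 * frobInner d0 d0 - frobInner A0 (W * d0)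
        - frobInner Xn d0 := by
    linarith [h2Bs, f13, f11]
  have hkey : frobInner Yk d0 - frobInner (S * Zk) d0
      = η⁻¹ * (2 * frobInner A0 d0 + 2 * frobInner d0 d0 - frobInner A0 (W * d0)
        - frobInner Xn d0) := by
    rw [← h']
    field_simp
  have e2eq : Lag F S η Xn B0 Yk Zk - Lag F S η Xn A0 Yk Zk
      = -(η⁻¹ * frobInner d0 d0) - 2⁻¹ * η⁻¹ * frobInner d0 (W * d0) := by
    simp only [Lag, frobSq, hc2]
    rw [f1, f2, f3, f4, f5, f6, f8]
    linear_combination -hkey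
  have quadpos : 0 ≤ frobInner d0 d0 + frobInner d0 (W * d0) := by
    have h := myFi_quad_nonneg (A := d0) hWlb.posSemidef
    rw [Matrix.add_mul, Matrix.one_mul, myFi_add_right] at h
    exact h
  have hprod : 0 ≤ η⁻¹ * (frobInner d0 d0 + frobInner d0 (W * d0)) :=
    mul_nonneg (by positivity) quadpos
  have e2 : Lag F S η Xn B0 Yk Zk - Lag F S η Xn A0 Yk Zk
      ≤ -((2*η)⁻¹ * frobSq d0) := by
    rw [e2eq, hc2]
    simp only [frobSq]
    rw [mul_add] at hprod
    linarith [hprod]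
  -- ===== step 1 : primal X update =====
  have hXkA : Xk - A0 = (Xn - A0) - d := by rw [hd]; abel
  have g1 : frobInner Yk (Xk - A0) = frobInner Yk (Xn - A0) - frobInner Yk d := by
    rw [hXkA, myFi_sub_right]
  have g2 : frobInner (Xk - A0) (Xk - A0)
      = frobInner (Xn - A0) (Xn - A0) - 2 * frobInner (Xn - A0) d
        + frobInner d d := by
    rw [hXkA, myFiSq_sub]
  have hF : F Xn - F Xk ≤ frobInner (G Xn) d + L/2 * frobInner d d := by
    have h := descent_lower L hL F G hgrad hLip Xk Xn
    have h1 : Xk - Xn = -d := by rw [hd]; abel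
    rw [h1, myFi_neg_right, myFrobSq_neg] at h
    simp only [frobSq] at h
    linarith [h]
  have hq0 : (0:ℝ) ≤ frobInner R R - 2 * (L * frobInner R d)
      + L * (L * frobInner d d) := by
    have h := myFrobSq_nonneg (R - L • d)
    simp only [frobSq, myFiSq_sub, myFi_smul_right, myFi_smul_left] at h
    linarith [h]
  have hA : frobInner R d ≤ ε (k+1)/(2*L) + L/2 * frobInner d d := by
    have h2L : (0:ℝ) < 2*L := by linarith
    have hq : frobInner R R ≤ ε (k+1) := by
      have := hresk
      simp only [frobSq] at this
      exact this
    have h1 : 2*L*frobInner R d ≤ ε (k+1) + L^2 * frobInner d d := by linarith [hq0, hq]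
    calc frobInner R d = (2*L*frobInner R d)/(2*L) := by field_simp
      _ ≤ (ε (k+1) + L^2 * frobInner d d)/(2*L) := by gcongr
      _ = ε (k+1)/(2*L) + L/2 * frobInner d d := by field_simp
  have hRexp : frobInner R d = frobInner (G Xn) d + frobInner Yk d
      + η⁻¹ * frobInner (Xn - A0) d := by
    rw [hR]
    simp only [myFi_add_left, myFi_smul_left]
  have e1eq : Lag F S η Xn A0 Yk Zk - Lag F S η Xk A0 Yk Zk
      = (F Xn - F Xk) + frobInner Yk d
        + 2⁻¹ * η⁻¹ * (2 * frobInner (Xn - A0) d - frobInner d d) := by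
    simp only [Lag, frobSq, hc2]
    rw [g1, g2]
    ring
  have e1 : Lag F S η Xn A0 Yk Zk - Lag F S η Xk A0 Yk Zk
      ≤ (2*L*η - 1)/(2*η) * frobSq d + ε (k+1)/(2*L) := by
    have hcoef : (2*L*η - 1)/(2*η) = L - 2⁻¹ * η⁻¹ := by field_simp
    rw [hcoef]
    simp only [frobSq]
    linarith [e1eq, hF, hRexp, hA]
  linarith [e1, e2, e3]

end
end

section
/- For ADAPD-OG iterates, if η < 1/L, then for all k ≥ 0: L_η(X^{k+1},X0^{k+1};Y^{k+1},Z^{k+1}) − L_η(X^k,X0^k;Y^k,Z^k) ≤ ((Lη − 1)/(2η))‖X^{k+1}−X^k‖_F² − (1/(2η))‖X0^{k+1}−X0^k‖_F² + η‖Y^{k+1}−Y^k‖_F² + η‖Z^{k+1}−Z^k‖_F². -/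
open Matrix Finset

attribute [local instance] Matrix.frobeniusNormedAddCommGroup Matrix.frobeniusNormedSpace

noncomputable section

variable {N p : ℕ}

lemma fi_comm (A B : Matrix (Fin N) (Fin p) ℝ) : frobInner A B = frobInner B A := by
  simp [frobInner, mul_comm]

lemma fi_add_left (A B C : Matrix (Fin N) (Fin p) ℝ) :
    frobInner (A + B) C = frobInner A C + frobInner B C := by
  simp [frobInner, Matrix.add_apply, add_mul, Finset.sum_add_distrib]

lemma fi_sub_left (A B C : Matrix (Fin N) (Fin p) ℝ) :
    frobInner (A - B) C = frobInner A C - frobInner B C := by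
  simp [frobInner, Matrix.sub_apply, sub_mul, Finset.sum_sub_distrib]

lemma fi_smul_left (r : ℝ) (A B : Matrix (Fin N) (Fin p) ℝ) :
    frobInner (r • A) B = r * frobInner A B := by
  simp [frobInner, Matrix.smul_apply, Finset.mul_sum, mul_assoc, smul_eq_mul]

lemma fi_add_right (A B C : Matrix (Fin N) (Fin p) ℝ) :
    frobInner A (B + C) = frobInner A B + frobInner A C := by
  rw [fi_comm, fi_add_left, fi_comm B A, fi_comm C A]

lemma fi_sub_right (A B C : Matrix (Fin N) (Fin p) ℝ) :
    frobInner A (B - C) = frobInner A B - frobInner A C := by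
  rw [fi_comm, fi_sub_left, fi_comm B A, fi_comm C A]

lemma fi_smul_right (r : ℝ) (A B : Matrix (Fin N) (Fin p) ℝ) :
    frobInner A (r • B) = r * frobInner A B := by
  rw [fi_comm, fi_smul_left, fi_comm B A]

lemma sum_swap3 (f : Fin N → Fin p → Fin N → ℝ) :
    (∑ i, ∑ j, ∑ l, f i j l) = ∑ l, ∑ j, ∑ i, f i j l :=
  calc (∑ i, ∑ j, ∑ l, f i j l) = ∑ j, ∑ i, ∑ l, f i j l := Finset.sum_comm
    _ = ∑ j, ∑ l, ∑ i, f i j l := Finset.sum_congr rfl fun j _ => Finset.sum_comm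
    _ = ∑ l, ∑ j, ∑ i, f i j l := Finset.sum_comm

lemma fi_mul_right (M : Matrix (Fin N) (Fin N) ℝ) (A B : Matrix (Fin N) (Fin p) ℝ) :
    frobInner A (M * B) = frobInner (Mᵀ * A) B := by
  simp only [frobInner, Matrix.mul_apply, Matrix.transpose_apply, Finset.mul_sum,
    Finset.sum_mul]
  rw [sum_swap3 (fun i j l => A i j * (M i l * B l j))]
  refine Finset.sum_congr rfl fun l _ => Finset.sum_congr rfl fun j _ =>
    Finset.sum_congr rfl fun i _ => by ring

lemma fi_self_nonneg (A : Matrix (Fin N) (Fin p) ℝ) : 0 ≤ frobInner A A := by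
  refine Finset.sum_nonneg fun i _ => Finset.sum_nonneg fun j _ => mul_self_nonneg _

lemma fi_psd {M : Matrix (Fin N) (Fin N) ℝ} (hM : M.PosSemidef)
    (A : Matrix (Fin N) (Fin p) ℝ) : 0 ≤ frobInner A (M * A) := by
  have : frobInner A (M * A)
      = ∑ j, dotProduct (star (fun i => A i j)) (M *ᵥ (fun i => A i j)) := by
    rw [frobInner, Finset.sum_comm]
    refine Finset.sum_congr rfl fun j _ => ?_
    simp [dotProduct, Matrix.mul_apply, Matrix.mulVec, star]
  rw [this]
  exact Finset.sum_nonneg fun j _ => hM.dotProduct_mulVec_nonneg _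

lemma frobNorm_mul_self (A : Matrix (Fin N) (Fin p) ℝ) :
    frobNorm A * frobNorm A = frobSq A :=
  Real.mul_self_sqrt (fi_self_nonneg A)

lemma frobNorm_smul (t : ℝ) (A : Matrix (Fin N) (Fin p) ℝ) :
    frobNorm (t • A) = |t| * frobNorm A := by
  unfold frobNorm
  rw [fi_smul_left, fi_smul_right]
  have h : t * (t * frobInner A A) = t ^ 2 * frobInner A A := by ring
  rw [h, Real.sqrt_mul (sq_nonneg t), Real.sqrt_sq_eq_abs]

lemma fi_cs (A B : Matrix (Fin N) (Fin p) ℝ) :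
    frobInner A B ≤ frobNorm A * frobNorm B := by
  let v : EuclideanSpace ℝ (Fin N × Fin p) := WithLp.toLp 2 fun q => A q.1 q.2
  let w : EuclideanSpace ℝ (Fin N × Fin p) := WithLp.toLp 2 fun q => B q.1 q.2
  have hv : ‖v‖ = frobNorm A := by
    rw [EuclideanSpace.norm_eq, frobNorm]
    congr 1
    rw [Fintype.sum_prod_type]
    simp [frobInner, v, sq]
  have hw : ‖w‖ = frobNorm B := by
    rw [EuclideanSpace.norm_eq, frobNorm]
    congr 1
    rw [Fintype.sum_prod_type]
    simp [frobInner, w, sq]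
  have hi : (inner ℝ v w) = frobInner A B := by
    rw [PiLp.inner_apply, Fintype.sum_prod_type]
    simp [frobInner, v, w, mul_comm]
  rw [← hv, ← hw, ← hi]
  exact real_inner_le_norm v w

lemma descent {L : ℝ} (hL : 0 < L) (F : Matrix (Fin N) (Fin p) ℝ → ℝ)
    (G : Matrix (Fin N) (Fin p) ℝ → Matrix (Fin N) (Fin p) ℝ)
    (hgrad : ∀ U, HasFDerivAt F (frobCLM (G U)) U)
    (hLip : ∀ U V, frobNorm (G U - G V) ≤ L * frobNorm (U - V))
    (U V : Matrix (Fin N) (Fin p) ℝ) :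
    F V ≤ F U + frobInner (G U) (V - U) + L / 2 * frobSq (V - U) := by
  set D := V - U with hD
  set φ : ℝ → ℝ := fun t => F (U + t • D) - t * frobInner (G U) D - L / 2 * t ^ 2 * frobSq D
    with hφ
  have hd : ∀ t : ℝ, HasDerivAt φ
      (frobInner (G (U + t • D)) D - frobInner (G U) D - L * t * frobSq D) t := by
    intro t
    have h1 : HasDerivAt (fun t : ℝ => U + t • D) D t := by
      exact (((hasDerivAt_id t).smul_const D).const_add U).congr_deriv (one_smul ℝ D)
    have h2 : HasDerivAt (fun t : ℝ => F (U + t • D)) (frobInner (G (U + t • D)) D) t := by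
      have := (hgrad (U + t • D)).comp_hasDerivAt t h1
      exact this
    have h3 : HasDerivAt (fun t : ℝ => t * frobInner (G U) D) (frobInner (G U) D) t := by
      simpa using (hasDerivAt_id t).mul_const (frobInner (G U) D)
    have h4 : HasDerivAt (fun t : ℝ => L / 2 * t ^ 2 * frobSq D) (L * t * frobSq D) t := by
      have := ((hasDerivAt_pow 2 t).const_mul (L / 2)).mul_const (frobSq D)
      refine this.congr_deriv ?_
      rw [show (2:ℕ) - 1 = 1 from rfl]
      push_cast
      ring
    exact (h2.sub h3).sub h4
  have hanti : AntitoneOn φ (Set.Icc (0:ℝ) 1) := by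
    apply antitoneOn_of_deriv_nonpos (convex_Icc 0 1)
    · exact fun t _ => ((hd t).differentiableAt).continuousAt.continuousWithinAt
    · exact fun t _ => ((hd t).differentiableAt).differentiableWithinAt
    · intro t ht
      rw [interior_Icc] at ht
      rw [(hd t).deriv]
      have hsub : frobInner (G (U + t • D)) D - frobInner (G U) D
          = frobInner (G (U + t • D) - G U) D := (fi_sub_left _ _ _).symm
      have hcs : frobInner (G (U + t • D) - G U) D
          ≤ frobNorm (G (U + t • D) - G U) * frobNorm D := fi_cs _ _
      have hlip : frobNorm (G (U + t • D) - G U) ≤ L * (t * frobNorm D) := by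
        have := hLip (U + t • D) U
        rw [show U + t • D - U = t • D by abel, frobNorm_smul,
          abs_of_pos ht.1] at this
        linarith [this]
      have hDn : 0 ≤ frobNorm D := Real.sqrt_nonneg _
      have : frobNorm (G (U + t • D) - G U) * frobNorm D ≤ L * t * (frobNorm D * frobNorm D) :=
        by nlinarith
      rw [frobNorm_mul_self] at this
      rw [hsub]
      linarith
  have h01 := hanti (Set.left_mem_Icc.2 zero_le_one) (Set.right_mem_Icc.2 zero_le_one)
    zero_le_one
  have h0 : φ 0 = F U := by simp [hφ]
  have h1 : φ 1 = F V - frobInner (G U) D - L / 2 * frobSq D := by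
    simp [hφ, hD]
  rw [h0, h1] at h01
  linarith

lemma fi_neg_left (A B : Matrix (Fin N) (Fin p) ℝ) :
    frobInner (-A) B = -frobInner A B := by
  simpa using fi_smul_left (-1) A B

lemma fi_neg_right (A B : Matrix (Fin N) (Fin p) ℝ) :
    frobInner A (-B) = -frobInner A B := by
  simpa using fi_smul_right (-1) A B

/-- Lemma: change of the augmented Lagrangian over one ADAPD-OG iteration. -/
theorem adapd_og_al_decrease (N p : ℕ) (hN : 0 < N) (hp : 0 < p)
    -- mixing matrix assumptions
    (W : Matrix (Fin N) (Fin N) ℝ) (hWsym : Wᵀ = W)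
    (hWub : Matrix.PosSemidef (1 - W)) (hWlb : Matrix.PosDef (1 + W))
    (hWnull : ∀ v : Fin N → ℝ, (1 - W).mulVec v = 0 ↔ ∃ c : ℝ, v = fun _ => c)
    (ρ : ℝ) (hρdef : ρ = specNorm (W - (N:ℝ)⁻¹ • onesMat N)) (hρlt : ρ < 1)
    -- `S` is the unique positive semidefinite square root of `I − W`
    (S : Matrix (Fin N) (Fin N) ℝ) (hSpsd : S.PosSemidef) (hSsq : S * S = 1 - W)
    -- objective: `F` is `L`-smooth (gradient `G` w.r.t. the Frobenius inner product)
    -- and bounded below by `flb`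
    (L flb : ℝ) (hL : 0 < L)
    (F : Matrix (Fin N) (Fin p) ℝ → ℝ)
    (G : Matrix (Fin N) (Fin p) ℝ → Matrix (Fin N) (Fin p) ℝ)
    (hgrad : ∀ U, HasFDerivAt F (frobCLM (G U)) U)
    (hLip : ∀ U V, frobNorm (G U - G V) ≤ L * frobNorm (U - V))
    (hlb : ∀ U, flb ≤ F U)
    -- ADAPD-OG iterates with parameter `η`
    (η : ℝ) (hη : 0 < η)
    (X X0 Y Z : ℕ → Matrix (Fin N) (Fin p) ℝ)
    (hZ0 : ∃ U0 : Matrix (Fin N) (Fin p) ℝ, Z 0 = S * U0)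
    (hY0 : Y 0 = - G (X 0))
    (hXit : ∀ k, X (k+1) = X0 k - η • (G (X k) + Y k))
    (hX0it : ∀ k, X0 (k+1) = (2:ℝ)⁻¹ • (W * X0 k + X (k+1) + η • (Y k - S * Z k)))
    (hYit : ∀ k, Y (k+1) = Y k + η⁻¹ • (X (k+1) - X0 (k+1)))
    (hZit : ∀ k, Z (k+1) = Z k + η⁻¹ • (S * X0 (k+1)))
    (hη1 : η < 1/L) :
    ∀ k : ℕ,
      Lag F S η (X (k+1)) (X0 (k+1)) (Y (k+1)) (Z (k+1))
          - Lag F S η (X k) (X0 k) (Y k) (Z k)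
        ≤ (L*η - 1)/(2*η) * frobSq (X (k+1) - X k)
          - (2*η)⁻¹ * frobSq (X0 (k+1) - X0 k)
          + η * frobSq (Y (k+1) - Y k) + η * frobSq (Z (k+1) - Z k) := by
  intro k
  have hη0 : η ≠ 0 := ne_of_gt hη
  have h2η : (2*η) ≠ 0 := by positivity
  have hSt : Sᵀ = S := by
    have h := hSpsd.1
    rw [Matrix.IsHermitian, Matrix.conjTranspose] at h
    ext i j
    simpa using congrFun (congrFun h i) j
  have hXk := hXit k
  have hX0k := hX0it k
  have hYk := hYit k
  have hZk := hZit k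
  clear hXit hX0it hYit hZit
  set x := X k with hxdef
  set x' := X (k+1) with hx'def
  set u := X0 k with hudef
  set u' := X0 (k+1) with hu'def
  set y := Y k with hydef
  set y' := Y (k+1) with hy'def
  set z := Z k with hzdef
  set z' := Z (k+1) with hz'def
  have hA : x' - u = -(η • (G x + y)) := by rw [hXk]; abel
  have h2 : (2:ℝ) • u' = W * u + x' + η • (y - S * z) := by
    rw [hX0k, smul_smul]; norm_num
  have h3 : η • (S * z) = W * u + x' + η • y - (2:ℝ) • u' := by
    rw [h2, smul_sub]; abel
  have hB : S * z = y + η⁻¹ • (W * u + x' - (2:ℝ) • u') := by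
    have h4 := congrArg (fun v => η⁻¹ • v) h3
    simp only [smul_smul, inv_mul_cancel₀ hη0, one_smul] at h4
    rw [h4]
    simp only [smul_add, smul_sub, smul_smul, inv_mul_cancel₀ hη0, one_smul]
    abel
  have hC : x' - u' = η • (y' - y) := by
    rw [hYk, add_sub_cancel_left, smul_smul, mul_inv_cancel₀ hη0, one_smul]
  have hD : S * u' = η • (z' - z) := by
    rw [hZk, add_sub_cancel_left, smul_smul, mul_inv_cancel₀ hη0, one_smul]
  -- Part (a): dual updates, exact identity
  have ha : Lag F S η x' u' y' z' - Lag F S η x' u' y z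
      = η * frobSq (y' - y) + η * frobSq (z' - z) := by
    have e : Lag F S η x' u' y' z' - Lag F S η x' u' y z
        = frobInner (y' - y) (x' - u') + frobInner (z' - z) (S * u') := by
      simp only [Lag]
      rw [fi_sub_left y' y (x' - u'), fi_sub_left z' z (S * u')]
      ring
    rw [e, hC, hD, fi_smul_right, fi_smul_right, frobSq, frobSq]
  -- Part (b): X0 update
  have hb : Lag F S η x' u' y z - Lag F S η x' u y z
      ≤ -((2*η)⁻¹ * frobSq (u' - u)) := by
    have hz1 : frobInner z (S * u') = frobInner (S * z) u' := by
      rw [fi_mul_right, hSt]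
    have hz2 : frobInner z (S * u) = frobInner (S * z) u := by
      rw [fi_mul_right, hSt]
    have hq1 : frobSq (S * u') = frobInner u' (u' - W * u') := by
      rw [frobSq, fi_mul_right, hSt, ← Matrix.mul_assoc, hSsq, Matrix.sub_mul,
        Matrix.one_mul, fi_comm]
    have hq2 : frobSq (S * u) = frobInner u (u - W * u) := by
      rw [frobSq, fi_mul_right, hSt, ← Matrix.mul_assoc, hSsq, Matrix.sub_mul,
        Matrix.one_mul, fi_comm]
    have hid : Lag F S η x' u' y z - Lag F S η x' u y z
        = -((2*η)⁻¹ * frobSq (u' - u))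
          - (2*η)⁻¹ * frobInner (u' - u) ((1 + W) * (u' - u)) := by
      simp only [Lag]
      rw [hz1, hz2, hq1, hq2, hB]
      simp only [frobSq]
      simp only [Matrix.add_mul, Matrix.mul_sub, Matrix.one_mul,
        fi_sub_left, fi_sub_right, fi_add_left, fi_add_right, fi_smul_left, fi_smul_right]
      have hsym6 : frobInner u (W * u') = frobInner u' (W * u) := by
        rw [fi_mul_right, hWsym, fi_comm]
      rw [fi_comm u' x', fi_comm u x', fi_comm u u', fi_comm (W * u) u',
        fi_comm (W * u) u, hsym6]
      field_simp
      ring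
    have hpsd : 0 ≤ frobInner (u' - u) ((1 + W) * (u' - u)) :=
      fi_psd hWlb.posSemidef _
    have hc0 : 0 < (2*η)⁻¹ := by positivity
    have hmul := mul_nonneg (le_of_lt hc0) hpsd
    linarith [hid]
  -- Part (c): X update, descent lemma
  have hdesc := descent hL F G hgrad hLip x x'
  have hc : Lag F S η x' u y z - Lag F S η x u y z
      ≤ (L*η - 1)/(2*η) * frobSq (x' - x) := by
    have hxu : x - u = -(η • (G x + y)) - (x' - x) := by rw [hXk]; abel
    have hid : Lag F S η x' u y z - Lag F S η x u y z
        = F x' - F x - frobInner (G x) (x' - x) - (2*η)⁻¹ * frobSq (x' - x) := by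
      simp only [Lag, frobSq]
      rw [hA, hxu]
      simp only [fi_sub_left, fi_sub_right, fi_add_left, fi_add_right,
        fi_smul_left, fi_smul_right, fi_neg_left, fi_neg_right]
      rw [fi_comm (G x) y, fi_comm x' (G x), fi_comm x (G x), fi_comm x' y,
        fi_comm x y, fi_comm x x']
      field_simp
      ring
    have hco : L/2 * frobSq (x' - x) - (2*η)⁻¹ * frobSq (x' - x)
        = (L*η - 1)/(2*η) * frobSq (x' - x) := by
      field_simp
    linarith [hid, hdesc, hco]
  linarith [ha, hb, hc]

end
end
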